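/- arXiv:2502.12142 — 2 statements merged into one kernel-verified Lean document; each statement's English description precedes it below -/
import Mathlib

section
/- The 8-component vector w(x) with components given by all products j_{ℓ₁+ε₁}(k₁x) j_{ℓ₂+ε₂}(k₂x) j_{ℓ₃+ε₃}(k₃x) for εᵢ ∈ {0,1} (ordered as in the paper) satisfies a first-order linear ODE w'(x) = A(x) w(x) where each entry of A(x) is either 0, ±kᵢ, or c/x for an integer c determined by ℓ₁, ℓ₂, ℓ₃; in particular A₁₁ = (ℓ₁+ℓ₂+ℓ₃)/x and A₈₈ = −(ℓ₁+ℓ₂+ℓ₃+6)/x. -/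
open Matrix

section SphBesselAux

variable {α : Type*}

private lemma cv0 (a0 a1 a2 a3 a4 a5 a6 a7 : α) (h : 0 < 8) :
    ![a0,a1,a2,a3,a4,a5,a6,a7] ⟨0,h⟩ = a0 := rfl
private lemma cv1 (a0 a1 a2 a3 a4 a5 a6 a7 : α) (h : 1 < 8) :
    ![a0,a1,a2,a3,a4,a5,a6,a7] ⟨1,h⟩ = a1 := rfl
private lemma cv2 (a0 a1 a2 a3 a4 a5 a6 a7 : α) (h : 2 < 8) :
    ![a0,a1,a2,a3,a4,a5,a6,a7] ⟨2,h⟩ = a2 := rfl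
private lemma cv3 (a0 a1 a2 a3 a4 a5 a6 a7 : α) (h : 3 < 8) :
    ![a0,a1,a2,a3,a4,a5,a6,a7] ⟨3,h⟩ = a3 := rfl
private lemma cv4 (a0 a1 a2 a3 a4 a5 a6 a7 : α) (h : 4 < 8) :
    ![a0,a1,a2,a3,a4,a5,a6,a7] ⟨4,h⟩ = a4 := rfl
private lemma cv5 (a0 a1 a2 a3 a4 a5 a6 a7 : α) (h : 5 < 8) :
    ![a0,a1,a2,a3,a4,a5,a6,a7] ⟨5,h⟩ = a5 := rfl
private lemma cv6 (a0 a1 a2 a3 a4 a5 a6 a7 : α) (h : 6 < 8) :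
    ![a0,a1,a2,a3,a4,a5,a6,a7] ⟨6,h⟩ = a6 := rfl
private lemma cv7 (a0 a1 a2 a3 a4 a5 a6 a7 : α) (h : 7 < 8) :
    ![a0,a1,a2,a3,a4,a5,a6,a7] ⟨7,h⟩ = a7 := rfl
private lemma fm0 : (0 : Fin 8) = ⟨0, by norm_num⟩ := rfl
private lemma fm1 : (1 : Fin 8) = ⟨1, by norm_num⟩ := rfl
private lemma fm2 : (2 : Fin 8) = ⟨2, by norm_num⟩ := rfl
private lemma fm3 : (3 : Fin 8) = ⟨3, by norm_num⟩ := rfl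
private lemma fm4 : (4 : Fin 8) = ⟨4, by norm_num⟩ := rfl
private lemma fm5 : (5 : Fin 8) = ⟨5, by norm_num⟩ := rfl
private lemma fm6 : (6 : Fin 8) = ⟨6, by norm_num⟩ := rfl
private lemma fm7 : (7 : Fin 8) = ⟨7, by norm_num⟩ := rfl

end SphBesselAux

set_option maxHeartbeats 2000000 in
/-- the 8-vector of all products `j_{ℓ₁+ε₁}(k₁x) j_{ℓ₂+ε₂}(k₂x) j_{ℓ₃+ε₃}(k₃x)`,
`εᵢ ∈ {0,1}`, ordered (000),(100),(010),(001),(110),(011),(101),(111), satisfies a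
first-order linear ODE `w' = A w` where every entry of `A` is `0`, `±kᵢ`, or `c/x` for
an integer `c`; in particular `A₁₁ = (ℓ₁+ℓ₂+ℓ₃)/x` and `A₈₈ = -(ℓ₁+ℓ₂+ℓ₃+6)/x`. -/
theorem sph_bessel_triple_ode (j : ℕ → ℝ → ℝ)
    (hj : ∀ (ℓ : ℕ) (z : ℝ), 0 < z →
      HasDerivAt (j ℓ) ((ℓ / z) * j ℓ z - j (ℓ + 1) z) z)
    (hj' : ∀ (ℓ : ℕ) (z : ℝ), 0 < z →
      HasDerivAt (j (ℓ + 1)) (j ℓ z - ((ℓ + 2) / z) * j (ℓ + 1) z) z)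
    (ℓ₁ ℓ₂ ℓ₃ : ℕ) (k₁ k₂ k₃ : ℝ) (hk₁ : 0 < k₁) (hk₂ : 0 < k₂) (hk₃ : 0 < k₃)
    (x : ℝ) (hx : 0 < x) :
    ∃ A : Matrix (Fin 8) (Fin 8) ℝ,
      HasDerivAt
        (fun y : ℝ =>
          ![j ℓ₁ (k₁ * y) * j ℓ₂ (k₂ * y) * j ℓ₃ (k₃ * y),
            j (ℓ₁ + 1) (k₁ * y) * j ℓ₂ (k₂ * y) * j ℓ₃ (k₃ * y),
            j ℓ₁ (k₁ * y) * j (ℓ₂ + 1) (k₂ * y) * j ℓ₃ (k₃ * y),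
            j ℓ₁ (k₁ * y) * j ℓ₂ (k₂ * y) * j (ℓ₃ + 1) (k₃ * y),
            j (ℓ₁ + 1) (k₁ * y) * j (ℓ₂ + 1) (k₂ * y) * j ℓ₃ (k₃ * y),
            j ℓ₁ (k₁ * y) * j (ℓ₂ + 1) (k₂ * y) * j (ℓ₃ + 1) (k₃ * y),
            j (ℓ₁ + 1) (k₁ * y) * j ℓ₂ (k₂ * y) * j (ℓ₃ + 1) (k₃ * y),
            j (ℓ₁ + 1) (k₁ * y) * j (ℓ₂ + 1) (k₂ * y) * j (ℓ₃ + 1) (k₃ * y)])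
        (A.mulVec
          ![j ℓ₁ (k₁ * x) * j ℓ₂ (k₂ * x) * j ℓ₃ (k₃ * x),
            j (ℓ₁ + 1) (k₁ * x) * j ℓ₂ (k₂ * x) * j ℓ₃ (k₃ * x),
            j ℓ₁ (k₁ * x) * j (ℓ₂ + 1) (k₂ * x) * j ℓ₃ (k₃ * x),
            j ℓ₁ (k₁ * x) * j ℓ₂ (k₂ * x) * j (ℓ₃ + 1) (k₃ * x),
            j (ℓ₁ + 1) (k₁ * x) * j (ℓ₂ + 1) (k₂ * x) * j ℓ₃ (k₃ * x),
            j ℓ₁ (k₁ * x) * j (ℓ₂ + 1) (k₂ * x) * j (ℓ₃ + 1) (k₃ * x),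
            j (ℓ₁ + 1) (k₁ * x) * j ℓ₂ (k₂ * x) * j (ℓ₃ + 1) (k₃ * x),
            j (ℓ₁ + 1) (k₁ * x) * j (ℓ₂ + 1) (k₂ * x) * j (ℓ₃ + 1) (k₃ * x)]) x ∧
      (∀ i j' : Fin 8, A i j' = 0 ∨ A i j' = k₁ ∨ A i j' = -k₁ ∨ A i j' = k₂ ∨
        A i j' = -k₂ ∨ A i j' = k₃ ∨ A i j' = -k₃ ∨ ∃ c : ℤ, A i j' = (c : ℝ) / x) ∧
      A 0 0 = ((ℓ₁ : ℝ) + ℓ₂ + ℓ₃) / x ∧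
      A 7 7 = -(((ℓ₁ : ℝ) + ℓ₂ + ℓ₃) + 6) / x := by
  have hx' : x ≠ 0 := ne_of_gt hx
  have D0 : ∀ (ℓ : ℕ) (k : ℝ), 0 < k → HasDerivAt (fun y => j ℓ (k * y))
      (((ℓ : ℝ) / x) * j ℓ (k * x) - k * j (ℓ + 1) (k * x)) x := by
    intro ℓ k hk
    have h := (hj ℓ (k * x) (by positivity)).comp x ((hasDerivAt_id x).const_mul k)
    convert h using 1
    iterate 3 rfl
    field_simp
  have D1 : ∀ (ℓ : ℕ) (k : ℝ), 0 < k → HasDerivAt (fun y => j (ℓ + 1) (k * y))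
      (k * j ℓ (k * x) - (((ℓ : ℝ) + 2) / x) * j (ℓ + 1) (k * x)) x := by
    intro ℓ k hk
    have h := (hj' ℓ (k * x) (by positivity)).comp x ((hasDerivAt_id x).const_mul k)
    convert h using 1
    iterate 3 rfl
    field_simp
  refine ⟨!![((((ℓ₁:ℤ)+ℓ₂+ℓ₃ : ℤ) : ℝ))/x, -k₁, -k₂, -k₃, 0, 0, 0, 0;
             k₁, ((((ℓ₂:ℤ)+ℓ₃-ℓ₁-2 : ℤ) : ℝ))/x, 0, 0, -k₂, 0, -k₃, 0;
             k₂, 0, ((((ℓ₁:ℤ)+ℓ₃-ℓ₂-2 : ℤ) : ℝ))/x, 0, -k₁, -k₃, 0, 0;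
             k₃, 0, 0, ((((ℓ₁:ℤ)+ℓ₂-ℓ₃-2 : ℤ) : ℝ))/x, 0, -k₂, -k₁, 0;
             0, k₂, k₁, 0, ((((ℓ₃:ℤ)-ℓ₁-ℓ₂-4 : ℤ) : ℝ))/x, 0, 0, -k₃;
             0, 0, k₃, k₂, 0, ((((ℓ₁:ℤ)-ℓ₂-ℓ₃-4 : ℤ) : ℝ))/x, 0, -k₁;
             0, k₃, 0, k₁, 0, 0, ((((ℓ₂:ℤ)-ℓ₁-ℓ₃-4 : ℤ) : ℝ))/x, -k₂;
             0, 0, 0, 0, k₃, k₁, k₂, (((-(ℓ₁:ℤ)-ℓ₂-ℓ₃-6 : ℤ) : ℝ))/x], ?_, ?_, ?_, ?_⟩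
  · rw [hasDerivAt_pi]
    intro i
    fin_cases i <;>
      simp only [Matrix.mulVec, dotProduct, Fin.sum_univ_eight, Matrix.of_apply,
        fm0, fm1, fm2, fm3, fm4, fm5, fm6, fm7,
        cv0, cv1, cv2, cv3, cv4, cv5, cv6, cv7] <;>
      [ (have h := ((D0 ℓ₁ k₁ hk₁).mul (D0 ℓ₂ k₂ hk₂)).mul (D0 ℓ₃ k₃ hk₃));
        (have h := ((D1 ℓ₁ k₁ hk₁).mul (D0 ℓ₂ k₂ hk₂)).mul (D0 ℓ₃ k₃ hk₃));
        (have h := ((D0 ℓ₁ k₁ hk₁).mul (D1 ℓ₂ k₂ hk₂)).mul (D0 ℓ₃ k₃ hk₃));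
        (have h := ((D0 ℓ₁ k₁ hk₁).mul (D0 ℓ₂ k₂ hk₂)).mul (D1 ℓ₃ k₃ hk₃));
        (have h := ((D1 ℓ₁ k₁ hk₁).mul (D1 ℓ₂ k₂ hk₂)).mul (D0 ℓ₃ k₃ hk₃));
        (have h := ((D0 ℓ₁ k₁ hk₁).mul (D1 ℓ₂ k₂ hk₂)).mul (D1 ℓ₃ k₃ hk₃));
        (have h := ((D1 ℓ₁ k₁ hk₁).mul (D0 ℓ₂ k₂ hk₂)).mul (D1 ℓ₃ k₃ hk₃));
        (have h := ((D1 ℓ₁ k₁ hk₁).mul (D1 ℓ₂ k₂ hk₂)).mul (D1 ℓ₃ k₃ hk₃))] <;>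
      (convert h using 1; rfl; exact funext fun _ => rfl; push_cast [Pi.mul_apply]; field_simp; ring)
  · intro i j'
    fin_cases i <;> fin_cases j' <;>
      simp only [Matrix.of_apply, cv0, cv1, cv2, cv3, cv4, cv5, cv6, cv7] <;>
      first
        | exact Or.inl rfl
        | exact Or.inr (Or.inl rfl)
        | exact Or.inr (Or.inr (Or.inl rfl))
        | exact Or.inr (Or.inr (Or.inr (Or.inl rfl)))
        | exact Or.inr (Or.inr (Or.inr (Or.inr (Or.inl rfl))))
        | exact Or.inr (Or.inr (Or.inr (Or.inr (Or.inr (Or.inl rfl)))))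
        | exact Or.inr (Or.inr (Or.inr (Or.inr (Or.inr (Or.inr (Or.inl rfl))))))
        | exact Or.inr (Or.inr (Or.inr (Or.inr (Or.inr (Or.inr (Or.inr ⟨_, rfl⟩))))))
        | tauto
  · simp only [Matrix.of_apply, fm0, cv0]
    push_cast
    ring
  · simp only [Matrix.of_apply, fm7, cv7]
    push_cast
    ring
end

section
/- If f : [a,b] → ℝ is continuously differentiable and k > 0, then ∫_a^b f(x) j_ℓ(kx) dx = [p₁(x) j_ℓ(kx) + p₂(x) j_{ℓ+1}(kx)]_a^b for any continuously differentiable p₁, p₂ : [a,b] → ℝ satisfying p₁'(x) + (ℓ/x) p₁(x) + k p₂(x) = f(x) and p₂'(x) − k p₁(x) − ((ℓ+2)/x) p₂(x) = 0 on [a,b], assuming 0 < a < b. -/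
open MeasureTheory

/-- single-spherical-Bessel instance of Levin's method: the oscillatory
integral reduces to boundary terms of `p₁ j_ℓ + p₂ j_{ℓ+1}` when `p₁, p₂` satisfy
the Levin ODE system. -/
theorem levin_single_sph_bessel (j : ℕ → ℝ → ℝ)
    (hj : ∀ (ℓ : ℕ) (z : ℝ), 0 < z →
      HasDerivAt (j ℓ) ((ℓ / z) * j ℓ z - j (ℓ + 1) z) z)
    (hj' : ∀ (ℓ : ℕ) (z : ℝ), 0 < z →
      HasDerivAt (j (ℓ + 1)) (j ℓ z - ((ℓ + 2) / z) * j (ℓ + 1) z) z)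
    (ℓ : ℕ) (a b k : ℝ) (ha : 0 < a) (hab : a < b) (hk : 0 < k)
    (f f' : ℝ → ℝ)
    (hf : ∀ x ∈ Set.Icc a b, HasDerivWithinAt f (f' x) (Set.Icc a b) x)
    (hf' : ContinuousOn f' (Set.Icc a b))
    (p₁ p₂ p₁' p₂' : ℝ → ℝ)
    (hp₁ : ∀ x ∈ Set.Icc a b, HasDerivWithinAt p₁ (p₁' x) (Set.Icc a b) x)
    (hp₂ : ∀ x ∈ Set.Icc a b, HasDerivWithinAt p₂ (p₂' x) (Set.Icc a b) x)
    (hp₁' : ContinuousOn p₁' (Set.Icc a b))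
    (hp₂' : ContinuousOn p₂' (Set.Icc a b))
    (heq₁ : ∀ x ∈ Set.Icc a b, p₁' x + ((ℓ : ℝ) / x) * p₁ x + k * p₂ x = f x)
    (heq₂ : ∀ x ∈ Set.Icc a b, p₂' x - k * p₁ x - (((ℓ : ℝ) + 2) / x) * p₂ x = 0) :
    ∫ x in a..b, f x * j ℓ (k * x) =
      (p₁ b * j ℓ (k * b) + p₂ b * j (ℓ + 1) (k * b)) -
      (p₁ a * j ℓ (k * a) + p₂ a * j (ℓ + 1) (k * a)) := by

  set F : ℝ → ℝ := fun x => p₁ x * j ℓ (k * x) + p₂ x * j (ℓ + 1) (k * x) with hF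
  have key : ∀ x ∈ Set.Icc a b,
      HasDerivWithinAt F (f x * j ℓ (k * x)) (Set.Icc a b) x := by
    intro x hx
    have hx0 : 0 < x := lt_of_lt_of_le ha hx.1
    have hkx : 0 < k * x := mul_pos hk hx0
    have hlin : HasDerivAt (fun y : ℝ => k * y) k x := by
      simpa using (hasDerivAt_id x).const_mul k
    have h1 : HasDerivAt (fun y => j ℓ (k * y))
        (((ℓ / (k * x)) * j ℓ (k * x) - j (ℓ + 1) (k * x)) * k) x :=
      (hj ℓ (k * x) hkx).comp x hlin
    have h2 : HasDerivAt (fun y => j (ℓ + 1) (k * y))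
        ((j ℓ (k * x) - ((ℓ + 2) / (k * x)) * j (ℓ + 1) (k * x)) * k) x :=
      (hj' ℓ (k * x) hkx).comp x hlin
    have hd : HasDerivWithinAt F
        ((p₁' x * j ℓ (k * x) +
          p₁ x * (((ℓ / (k * x)) * j ℓ (k * x) - j (ℓ + 1) (k * x)) * k)) +
         (p₂' x * j (ℓ + 1) (k * x) +
          p₂ x * ((j ℓ (k * x) - ((ℓ + 2) / (k * x)) * j (ℓ + 1) (k * x)) * k)))
        (Set.Icc a b) x :=
      ((hp₁ x hx).mul h1.hasDerivWithinAt).add ((hp₂ x hx).mul h2.hasDerivWithinAt)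
    have e1 := heq₁ x hx
    have e2 := heq₂ x hx
    have hne : x ≠ 0 := ne_of_gt hx0
    have hkne : k ≠ 0 := ne_of_gt hk
    convert hd using 1
    rw [← e1]
    have e2' : p₂' x = k * p₁ x + (((ℓ : ℝ) + 2) / x) * p₂ x := by linarith
    rw [e2']
    field_simp
    ring
  have hcont : ContinuousOn F (Set.Icc a b) := fun x hx => (key x hx).continuousWithinAt
  have hderiv : ∀ x ∈ Set.Ioo a b,
      HasDerivWithinAt F (f x * j ℓ (k * x)) (Set.Ioi x) x := by
    intro x hx
    have hmem : Set.Icc a b ∈ nhds x := Icc_mem_nhds hx.1 hx.2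
    exact ((key x (Set.mem_Icc_of_Ioo hx)).hasDerivAt hmem).hasDerivWithinAt
  have hcontf : ContinuousOn f (Set.Icc a b) := fun x hx => (hf x hx).continuousWithinAt
  have hcontj : ContinuousOn (fun x => j ℓ (k * x)) (Set.Icc a b) := by
    intro x hx
    have hkx : 0 < k * x := mul_pos hk (lt_of_lt_of_le ha hx.1)
    exact (((hj ℓ (k * x) hkx).continuousAt.comp
      (continuous_const.mul continuous_id).continuousAt).continuousWithinAt)
  have hint : IntervalIntegrable (fun x => f x * j ℓ (k * x)) volume a b := by
    apply ContinuousOn.intervalIntegrable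
    rw [Set.uIcc_of_le hab.le]
    exact hcontf.mul hcontj
  have := intervalIntegral.integral_eq_sub_of_hasDeriv_right_of_le hab.le hcont hderiv hint
  simpa [hF] using this
end
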